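/- Let α : (0, ε₀) → (0, ∞) be differentiable and α₀ > 0 with α(ε) → α₀ as ε → 0⁺, and suppose |α'(ε)| α(ε)^{3/2} ≤ Cδ² for all ε ∈ (0, ε₀). If moreover α₀ ≥ c·δ for constants c, C > 0 and ε < δ < 1, then |α(ε)/α₀ − 1| ≤ C'√ε for a constant C' depending only on c and C. -/

import Mathlib

open Real Filter Set

private lemma aux_abs (x : ℝ) (hx : 0 ≤ x) : |x - 1| ≤ |x ^ ((5:ℝ)/2) - 1| := by
  rcases le_total x 1 with h | h
  · have hle : x ^ ((5:ℝ)/2) ≤ x := by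
      rcases eq_or_lt_of_le hx with h0 | h0
      · rw [← h0, Real.zero_rpow (by norm_num)]
      · calc x ^ ((5:ℝ)/2) ≤ x ^ (1:ℝ) :=
              Real.rpow_le_rpow_of_exponent_ge h0 h (by norm_num)
          _ = x := Real.rpow_one x
    have h2 : x ^ ((5:ℝ)/2) ≤ 1 := le_trans hle h
    rw [abs_sub_comm, abs_sub_comm _ (1:ℝ), abs_of_nonneg (by linarith),
      abs_of_nonneg (by linarith)]
    linarith
  · have hle : x ≤ x ^ ((5:ℝ)/2) := by
      calc x = x ^ (1:ℝ) := (Real.rpow_one x).symm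
        _ ≤ x ^ ((5:ℝ)/2) := Real.rpow_le_rpow_of_exponent_le h (by norm_num)
    rw [abs_of_nonneg (by linarith), abs_of_nonneg (by linarith)]
    linarith

/-- reduction step of Corollary 3.7: from the differential
inequality `|α'(ε)| α(ε)^{3/2} ≤ Cδ²`, `α(ε) → α₀` as `ε → 0⁺`, `α₀ ≥ cδ`
and `ε < δ < 1`, one gets `|α(ε)/α₀ − 1| ≤ C'√ε` with `C'` depending only
on `c` and `C`. -/
theorem stmt15 (c C : ℝ) (hc : 0 < c) (hC : 0 < C) :
    ∃ C' : ℝ, 0 < C' ∧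
      ∀ (ε₀ α₀ δ : ℝ) (α : ℝ → ℝ), 0 < ε₀ → 0 < α₀ →
        (∀ ε ∈ Set.Ioo (0 : ℝ) ε₀, DifferentiableAt ℝ α ε ∧ 0 < α ε) →
        Filter.Tendsto α (nhdsWithin 0 (Set.Ioi 0)) (nhds α₀) →
        (∀ ε ∈ Set.Ioo (0 : ℝ) ε₀,
          |deriv α ε| * (α ε) ^ ((3 : ℝ) / 2) ≤ C * δ ^ 2) →
        c * δ ≤ α₀ → 0 < δ → δ < 1 →
        ∀ ε ∈ Set.Ioo (0 : ℝ) ε₀, ε < δ →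
          |α ε / α₀ - 1| ≤ C' * Real.sqrt ε := by
  refine ⟨(5/2) * C / c ^ ((5:ℝ)/2), by positivity, ?_⟩
  intro ε₀ α₀ δ α hε₀ hα₀ hdiff htend hbound hcδ hδ hδ1 ε hεmem hεδ
  obtain ⟨hε, hεε₀⟩ := hεmem
  set g : ℝ → ℝ := fun t => α t ^ ((5:ℝ)/2) with hg
  set K : ℝ := (5/2) * (C * δ ^ 2) with hK
  -- derivative facts for g
  have hgderiv : ∀ x ∈ Set.Ioo (0:ℝ) ε₀,
      HasDerivAt g (deriv α x * ((5:ℝ)/2) * α x ^ ((3:ℝ)/2)) x := by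
    intro x hx
    obtain ⟨hd, hp⟩ := hdiff x hx
    have := hd.hasDerivAt.rpow_const (p := (5:ℝ)/2) (Or.inl (ne_of_gt hp))
    convert this using 2
    norm_num
  have hgdiff : ∀ x ∈ Set.Ioo (0:ℝ) ε₀, DifferentiableAt ℝ g x :=
    fun x hx => (hgderiv x hx).differentiableAt
  have hgbound : ∀ x ∈ Set.Ioo (0:ℝ) ε₀, ‖deriv g x‖ ≤ K := by
    intro x hx
    rw [(hgderiv x hx).deriv]
    have hp := (hdiff x hx).2
    have hb := hbound x hx
    rw [Real.norm_eq_abs, abs_mul, abs_mul, abs_of_nonneg (by positivity : (0:ℝ) ≤ α x ^ ((3:ℝ)/2)),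
      abs_of_nonneg (by norm_num : (0:ℝ) ≤ (5:ℝ)/2)]
    calc |deriv α x| * (5/2) * α x ^ ((3:ℝ)/2)
        = (5/2) * (|deriv α x| * α x ^ ((3:ℝ)/2)) := by ring
      _ ≤ (5/2) * (C * δ ^ 2) := by nlinarith
  -- Lipschitz bound on Ioo
  have hlip : ∀ t ∈ Set.Ioo (0:ℝ) ε, |g ε - g t| ≤ K * ε := by
    intro t ht
    have htmem : t ∈ Set.Ioo (0:ℝ) ε₀ := ⟨ht.1, lt_trans ht.2 hεε₀⟩
    have := Convex.norm_image_sub_le_of_norm_deriv_le (s := Set.Ioo (0:ℝ) ε₀)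
      hgdiff hgbound (convex_Ioo _ _) htmem ⟨hε, hεε₀⟩
    rw [Real.norm_eq_abs, Real.norm_eq_abs] at this
    have hK0 : 0 ≤ K := by positivity
    calc |g ε - g t| ≤ K * |ε - t| := this
      _ ≤ K * ε := by
          rw [abs_of_nonneg (by linarith [ht.2] : (0:ℝ) ≤ ε - t)]
          have := ht.1; nlinarith
  -- pass to the limit t → 0⁺
  have htendg : Filter.Tendsto g (nhdsWithin 0 (Set.Ioi 0)) (nhds (α₀ ^ ((5:ℝ)/2))) := by
    have hcont : ContinuousAt (fun y : ℝ => y ^ ((5:ℝ)/2)) α₀ :=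
      Real.continuousAt_rpow_const α₀ _ (Or.inl (ne_of_gt hα₀))
    exact hcont.tendsto.comp htend
  have hmain : |g ε - α₀ ^ ((5:ℝ)/2)| ≤ K * ε := by
    have htendsto : Filter.Tendsto (fun t => |g ε - g t|) (nhdsWithin 0 (Set.Ioi 0))
        (nhds (|g ε - α₀ ^ ((5:ℝ)/2)|)) :=
      ((tendsto_const_nhds.sub htendg).abs)
    refine le_of_tendsto htendsto ?_
    filter_upwards [Ioo_mem_nhdsGT_of_mem (by constructor <;> simp [hε] : (0:ℝ) ∈ Set.Ico 0 ε)]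
      with t ht using hlip t ht
  -- algebra
  have hαε : 0 < α ε := (hdiff ε ⟨hε, hεε₀⟩).2
  have hα₀ρ : 0 < α₀ ^ ((5:ℝ)/2) := Real.rpow_pos_of_pos hα₀ _
  have hratio : |(α ε / α₀) ^ ((5:ℝ)/2) - 1| ≤ K * ε / α₀ ^ ((5:ℝ)/2) := by
    rw [Real.div_rpow (le_of_lt hαε) (le_of_lt hα₀)]
    have heq : α ε ^ ((5:ℝ)/2) / α₀ ^ ((5:ℝ)/2) - 1
        = (α ε ^ ((5:ℝ)/2) - α₀ ^ ((5:ℝ)/2)) / α₀ ^ ((5:ℝ)/2) := by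
      field_simp
    rw [heq, abs_div, abs_of_pos hα₀ρ]
    gcongr
  have hcδρ : (c * δ) ^ ((5:ℝ)/2) ≤ α₀ ^ ((5:ℝ)/2) :=
    Real.rpow_le_rpow (by positivity) hcδ (by norm_num)
  have hcδρ0 : 0 < (c * δ) ^ ((5:ℝ)/2) := Real.rpow_pos_of_pos (by positivity) _
  have hstep : K * ε / α₀ ^ ((5:ℝ)/2) ≤ K * ε / (c * δ) ^ ((5:ℝ)/2) := by
    apply div_le_div_of_nonneg_left (by positivity) hcδρ0 hcδρ
  -- rewrite (c*δ)^{5/2} = c^{5/2} * δ^{5/2} and bound δ²ε/δ^{5/2} ≤ √ε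
  have hmulρ : (c * δ) ^ ((5:ℝ)/2) = c ^ ((5:ℝ)/2) * δ ^ ((5:ℝ)/2) :=
    Real.mul_rpow (le_of_lt hc) (le_of_lt hδ)
  have hδ2 : (δ:ℝ) ^ (2:ℕ) = δ ^ ((2:ℝ)) := by
    rw [← Real.rpow_natCast δ 2]; norm_num
  have hkey : δ ^ 2 * ε / δ ^ ((5:ℝ)/2) ≤ Real.sqrt ε := by
    have hsδ : 0 < Real.sqrt δ := Real.sqrt_pos.mpr hδ
    have h1 : δ ^ ((5:ℝ)/2) = δ ^ (2:ℝ) * δ ^ ((1:ℝ)/2) := by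
      rw [← Real.rpow_add hδ]; norm_num
    have h2 : δ ^ ((1:ℝ)/2) = Real.sqrt δ := by
      rw [Real.sqrt_eq_rpow]
    rw [h1, h2, hδ2]
    have hδ2pos : (0:ℝ) < δ ^ (2:ℝ) := Real.rpow_pos_of_pos hδ _
    rw [mul_div_mul_left _ _ (ne_of_gt hδ2pos)]
    -- now ε / √δ ≤ √ε
    rw [div_le_iff₀ hsδ]
    calc ε = Real.sqrt ε * Real.sqrt ε := (Real.mul_self_sqrt (le_of_lt hε)).symm
      _ ≤ Real.sqrt ε * Real.sqrt δ :=
          mul_le_mul_of_nonneg_left (Real.sqrt_le_sqrt (le_of_lt hεδ)) (Real.sqrt_nonneg ε)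
  calc |α ε / α₀ - 1| ≤ |(α ε / α₀) ^ ((5:ℝ)/2) - 1| := aux_abs _ (by positivity)
    _ ≤ K * ε / α₀ ^ ((5:ℝ)/2) := hratio
    _ ≤ K * ε / (c * δ) ^ ((5:ℝ)/2) := hstep
    _ = (5/2) * C / c ^ ((5:ℝ)/2) * (δ ^ 2 * ε / δ ^ ((5:ℝ)/2)) := by
        rw [hmulρ, hK]; field_simp
    _ ≤ (5/2) * C / c ^ ((5:ℝ)/2) * Real.sqrt ε := by
        apply mul_le_mul_of_nonneg_left hkey (by positivity)
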